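/- For any measurable function f on ℝ², the classical one-dimensional decreasing rearrangement of f₂* (as a function on ℝ₊², with respect to two-dimensional Lebesgue measure) equals the classical decreasing rearrangement f* of f: (f₂*)* = f*. -/

import Mathlib

open MeasureTheory Set ENNReal Filter

/-- Classical decreasing rearrangement of an `ℝ≥0∞`-valued function. -/
noncomputable def decRe {α : Type*} [MeasurableSpace α] (μ : Measure α)
    (g : α → ℝ≥0∞) (t : ℝ) : ℝ≥0∞ :=
  sInf {l : ℝ≥0∞ | μ {x | l < g x} ≤ ENNReal.ofReal t}

/-- `φ_E(x)`: the measure of the `x`-section of `E`. -/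
noncomputable def phiSec (E : Set (ℝ × ℝ)) (x : ℝ) : ℝ≥0∞ :=
  volume {y : ℝ | (x, y) ∈ E}

/-- The two-dimensional decreasing rearrangement `E*` of a set `E ⊆ ℝ²`. -/
def starSet (E : Set (ℝ × ℝ)) : Set (ℝ × ℝ) :=
  {p | 0 < p.1 ∧ 0 < p.2 ∧ ENNReal.ofReal p.2 < decRe volume (phiSec E) p.1}

/-- The two-dimensional decreasing rearrangement `f₂*` of a function (layer-cake formula). -/
noncomputable def rearr2 (f : ℝ × ℝ → ℝ) (x : ℝ × ℝ) : ℝ≥0∞ :=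
  ∫⁻ t in Set.Ioi (0 : ℝ), (starSet {p | t < |f p|}).indicator (fun _ => (1 : ℝ≥0∞)) x

/-- The open positive quadrant `ℝ₊²`. -/
def Quad : Set (ℝ × ℝ) := Set.Ioi 0 ×ˢ Set.Ioi 0


/-- The Lebesgue measure of `{t > 0 | ofReal t < c}` is `c`. -/
lemma vol_sub (c : ℝ≥0∞) : volume ({t : ℝ | ENNReal.ofReal t < c} ∩ Ioi 0) = c := by
  rcases eq_or_ne c ⊤ with rfl | hc
  · have : {t : ℝ | ENNReal.ofReal t < ⊤} ∩ Ioi 0 = Ioi 0 := by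
      ext t; simp [ENNReal.ofReal_lt_top]
    rw [this, Real.volume_Ioi]
  · have : {t : ℝ | ENNReal.ofReal t < c} ∩ Ioi 0 = Ioo 0 c.toReal := by
      ext t
      simp only [mem_inter_iff, mem_setOf_eq, mem_Ioi, mem_Ioo]
      constructor
      · rintro ⟨h1, h2⟩
        exact ⟨h2, (ENNReal.ofReal_lt_iff_lt_toReal h2.le hc).mp h1⟩
      · rintro ⟨h1, h2⟩
        exact ⟨(ENNReal.ofReal_lt_iff_lt_toReal h1.le hc).mpr h2, h1⟩
    rw [this, Real.volume_Ioo, sub_zero, ENNReal.ofReal_toReal hc]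


/-- The infimum defining `decRe` is attained (the defining set contains its inf). -/
lemma distSet_mem {α : Type*} [MeasurableSpace α] (μ : Measure α) (g : α → ℝ≥0∞)
    (a : ℝ≥0∞) :
    μ {x | sInf {l : ℝ≥0∞ | μ {x | l < g x} ≤ a} < g x} ≤ a := by
  set S : Set ℝ≥0∞ := {l : ℝ≥0∞ | μ {x | l < g x} ≤ a} with hS
  have hne : S.Nonempty := ⟨⊤, by simp [hS]⟩
  obtain ⟨u, hu_anti, hu_tendsto, hu_mem⟩ :=
    exists_seq_tendsto_sInf hne (OrderBot.bddBelow S)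
  have hsub : {x | sInf S < g x} ⊆ ⋃ n, {x | u n < g x} := by
    intro x hx
    have : ∀ᶠ n in atTop, u n < g x := hu_tendsto.eventually_lt_const hx
    obtain ⟨n, hn⟩ := this.exists
    exact mem_iUnion.mpr ⟨n, hn⟩
  calc μ {x | sInf S < g x} ≤ μ (⋃ n, {x | u n < g x}) := measure_mono hsub
    _ = ⨆ n, μ {x | u n < g x} := by
        refine Directed.measure_iUnion ?_
        intro m n
        refine ⟨max m n, ?_, ?_⟩
        · intro x hx; exact lt_of_le_of_lt (hu_anti (le_max_left m n)) hx
        · intro x hx; exact lt_of_le_of_lt (hu_anti (le_max_right m n)) hx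
    _ ≤ a := iSup_le fun n => hu_mem n


lemma decRe_le_iff {α : Type*} [MeasurableSpace α] {μ : Measure α} {g : α → ℝ≥0∞}
    {t : ℝ} {lam : ℝ≥0∞} :
    decRe μ g t ≤ lam ↔ μ {x | lam < g x} ≤ ENNReal.ofReal t := by
  constructor
  · intro h
    refine le_trans (measure_mono ?_) (distSet_mem μ g (ENNReal.ofReal t))
    intro x hx
    exact lt_of_le_of_lt h hx
  · intro h
    exact sInf_le h


lemma lt_decRe_iff {α : Type*} [MeasurableSpace α] {μ : Measure α} {g : α → ℝ≥0∞}
    {t : ℝ} {lam : ℝ≥0∞} :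
    lam < decRe μ g t ↔ ENNReal.ofReal t < μ {x | lam < g x} := by
  rw [← not_le, ← not_le, not_iff_not, decRe_le_iff]


/-- Equimeasurability of the decreasing rearrangement. -/
lemma decRe_equimeasurable {α : Type*} [MeasurableSpace α] (μ : Measure α)
    (g : α → ℝ≥0∞) (lam : ℝ≥0∞) :
    volume ({t : ℝ | lam < decRe μ g t} ∩ Ioi 0) = μ {x | lam < g x} := by
  have : {t : ℝ | lam < decRe μ g t} = {t : ℝ | ENNReal.ofReal t < μ {x | lam < g x}} := by
    ext t; exact lt_decRe_iff
  rw [this, vol_sub]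


lemma decRe_antitone {α : Type*} [MeasurableSpace α] (μ : Measure α) (g : α → ℝ≥0∞) :
    Antitone (decRe μ g) := by
  intro t₁ t₂ h
  exact sInf_le_sInf fun l hl => le_trans hl (ENNReal.ofReal_le_ofReal h)


lemma decRe_mono {α : Type*} [MeasurableSpace α] (μ : Measure α) {g₁ g₂ : α → ℝ≥0∞}
    (h : ∀ x, g₁ x ≤ g₂ x) (t : ℝ) : decRe μ g₁ t ≤ decRe μ g₂ t := by
  refine sInf_le_sInf fun l hl => ?_
  refine le_trans (measure_mono ?_) hl
  intro x hx
  exact lt_of_lt_of_le hx (h x)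


/-- Layer-cake formula for `ℝ≥0∞`-valued functions. -/
lemma layercake {α : Type*} [MeasurableSpace α] (μ : Measure α) [SigmaFinite μ]
    (h : α → ℝ≥0∞) (hm : Measurable h) :
    ∫⁻ x, h x ∂μ = ∫⁻ t in Ioi (0 : ℝ), μ {x | ENNReal.ofReal t < h x} := by
  have key : ∀ x, h x = ∫⁻ t in Ioi (0 : ℝ), ({t : ℝ | ENNReal.ofReal t < h x}).indicator
      (fun _ => (1 : ℝ≥0∞)) t := by
    intro x
    have hms : MeasurableSet {t : ℝ | ENNReal.ofReal t < h x} :=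
      measurableSet_lt ENNReal.measurable_ofReal measurable_const
    rw [lintegral_indicator hms, setLIntegral_one, Measure.restrict_apply hms, vol_sub]
  calc ∫⁻ x, h x ∂μ
      = ∫⁻ x, (∫⁻ t in Ioi (0 : ℝ), ({t : ℝ | ENNReal.ofReal t < h x}).indicator
          (fun _ => (1 : ℝ≥0∞)) t) ∂μ := by
        exact lintegral_congr key
    _ = ∫⁻ t in Ioi (0 : ℝ), (∫⁻ x, ({t : ℝ | ENNReal.ofReal t < h x}).indicator
          (fun _ => (1 : ℝ≥0∞)) t ∂μ) := by
        refine lintegral_lintegral_swap ?_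
        have : (Function.uncurry fun x t => ({t : ℝ | ENNReal.ofReal t < h x}).indicator
            (fun _ => (1 : ℝ≥0∞)) t)
            = ({p : α × ℝ | ENNReal.ofReal p.2 < h p.1}).indicator (fun _ => (1 : ℝ≥0∞)) := by
          ext p
          rcases p with ⟨x, t⟩
          simp only [Function.uncurry, Set.indicator, mem_setOf_eq]
        rw [this]
        refine (Measurable.indicator measurable_const ?_).aemeasurable
        exact measurableSet_lt (ENNReal.measurable_ofReal.comp measurable_snd)
          (hm.comp measurable_fst)
    _ = ∫⁻ t in Ioi (0 : ℝ), μ {x | ENNReal.ofReal t < h x} := by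
        refine lintegral_congr_ae (ae_of_all _ fun t => ?_)
        show (∫⁻ x, ({t' : ℝ | ENNReal.ofReal t' < h x}).indicator
            (fun _ => (1 : ℝ≥0∞)) t ∂μ) = μ {x | ENNReal.ofReal t < h x}
        rw [← lintegral_indicator_one (measurableSet_lt measurable_const hm)]
        refine lintegral_congr fun x => ?_
        simp only [Set.indicator, mem_setOf_eq]
        simp [Pi.one_apply]


lemma measurable_phiSec {E : Set (ℝ × ℝ)} (hE : MeasurableSet E) :
    Measurable (phiSec E) := by
  have : phiSec E = fun x => volume (Prod.mk x ⁻¹' E) := rfl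
  rw [this]
  exact measurable_measure_prodMk_left hE


lemma measurableSet_starSet (E : Set (ℝ × ℝ)) : MeasurableSet (starSet E) := by
  have hg : Measurable (decRe volume (phiSec E)) := (decRe_antitone _ _).measurable
  have : starSet E = (Prod.fst ⁻¹' Ioi (0 : ℝ)) ∩ (Prod.snd ⁻¹' Ioi (0 : ℝ)) ∩
      {p : ℝ × ℝ | ENNReal.ofReal p.2 < decRe volume (phiSec E) p.1} := by
    ext p
    simp only [starSet, mem_setOf_eq, mem_inter_iff, mem_preimage, mem_Ioi]
    tauto
  rw [this]
  exact ((measurable_fst measurableSet_Ioi).inter (measurable_snd measurableSet_Ioi)).inter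
    (measurableSet_lt (ENNReal.measurable_ofReal.comp measurable_snd) (hg.comp measurable_fst))


/-- The 2d rearrangement of a set preserves measure. -/
lemma vol_starSet {E : Set (ℝ × ℝ)} (hE : MeasurableSet E) :
    volume (starSet E) = volume E := by
  have hphi : Measurable (phiSec E) := measurable_phiSec hE
  set g : ℝ → ℝ≥0∞ := decRe volume (phiSec E) with hgdef
  have hg : Measurable g := (decRe_antitone _ _).measurable
  calc volume (starSet E)
      = ∫⁻ x, volume (Prod.mk x ⁻¹' starSet E) := by
        rw [MeasureTheory.Measure.volume_eq_prod, Measure.prod_apply (measurableSet_starSet E)]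
    _ = ∫⁻ x, (Ioi (0 : ℝ)).indicator g x := by
        refine lintegral_congr fun x => ?_
        rcases lt_or_ge 0 x with hx | hx
        · have hsec : Prod.mk x ⁻¹' starSet E
              = {y : ℝ | ENNReal.ofReal y < g x} ∩ Ioi 0 := by
            ext y
            simp only [mem_preimage, starSet, mem_setOf_eq, mem_inter_iff, mem_Ioi]
            constructor
            · rintro ⟨_, h2, h3⟩; exact ⟨h3, h2⟩
            · rintro ⟨h3, h2⟩; exact ⟨hx, h2, h3⟩
          rw [hsec, vol_sub]; exact (indicator_of_mem hx g).symm
        · have hsec : Prod.mk x ⁻¹' starSet E = ∅ := by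
            ext y
            simp only [mem_preimage, starSet, mem_setOf_eq, mem_empty_iff_false, iff_false]
            rintro ⟨h1, _, _⟩
            exact absurd h1 (not_lt.mpr hx)
          rw [hsec, measure_empty, indicator_of_notMem (by simpa using hx)]
    _ = ∫⁻ x in Ioi (0 : ℝ), g x := by rw [lintegral_indicator measurableSet_Ioi]
    _ = ∫⁻ t in Ioi (0 : ℝ), (volume.restrict (Ioi (0 : ℝ))) {x | ENNReal.ofReal t < g x} :=
        layercake _ g hg
    _ = ∫⁻ t in Ioi (0 : ℝ), volume {x | ENNReal.ofReal t < phiSec E x} := by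
        refine lintegral_congr fun t => ?_
        rw [Measure.restrict_apply (measurableSet_lt measurable_const hg)]
        exact decRe_equimeasurable volume (phiSec E) (ENNReal.ofReal t)
    _ = ∫⁻ x, phiSec E x := (layercake _ (phiSec E) hphi).symm
    _ = volume E := by
        rw [MeasureTheory.Measure.volume_eq_prod, Measure.prod_apply hE]
        rfl


lemma starSet_mono {E F : Set (ℝ × ℝ)} (h : E ⊆ F) : starSet E ⊆ starSet F := by
  rintro p ⟨h1, h2, h3⟩
  refine ⟨h1, h2, lt_of_lt_of_le h3 ?_⟩
  refine decRe_mono volume (fun x => ?_) p.1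
  exact measure_mono fun y hy => h hy


lemma lt_rearr2_iff (f : ℝ × ℝ → ℝ) (l : ℝ≥0∞) (x : ℝ × ℝ) :
    l < rearr2 f x ↔ ∃ q : ℚ, 0 < (q : ℝ) ∧ l < ENNReal.ofReal (q : ℝ) ∧
      x ∈ starSet {p | (q : ℝ) < |f p|} := by
  constructor
  · intro hl
    by_contra hcon
    push_neg at hcon
    have key : ∀ t : ℝ, 0 < t → x ∈ starSet {p | t < |f p|} → ENNReal.ofReal t ≤ l := by
      intro t ht hx
      by_contra hlt
      push_neg at hlt
      obtain ⟨r, hr0, hlr, hrt⟩ := ENNReal.lt_iff_exists_real_btwn.mp hlt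
      have hrt' : r < t := by
        rwa [ENNReal.ofReal_lt_ofReal_iff ht] at hrt
      obtain ⟨q, hq1, hq2⟩ := exists_rat_btwn hrt'
      have hq0 : 0 < (q : ℝ) := lt_of_le_of_lt hr0 hq1
      have hlq : l < ENNReal.ofReal (q : ℝ) :=
        lt_of_lt_of_le hlr (ENNReal.ofReal_le_ofReal hq1.le)
      have hxq : x ∈ starSet {p | (q : ℝ) < |f p|} :=
        starSet_mono (fun p hp => lt_trans hq2 hp) hx
      exact absurd hxq (hcon q hq0 hlq)
    rcases eq_or_ne l ⊤ with rfl | hlt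
    · exact absurd hl (not_lt.mpr le_top)
    refine absurd hl (not_lt.mpr ?_)
    calc rearr2 f x
        ≤ ∫⁻ t in Ioi (0 : ℝ), (Iic l.toReal).indicator (fun _ => (1 : ℝ≥0∞)) t := by
          refine setLIntegral_mono' measurableSet_Ioi fun t ht => ?_
          by_cases hxt : x ∈ starSet {p | t < |f p|}
          · have : t ≤ l.toReal := by
              have := key t ht hxt
              rwa [ENNReal.ofReal_le_iff_le_toReal hlt] at this
            rw [indicator_of_mem hxt, indicator_of_mem (mem_Iic.mpr this)]
          · rw [indicator_of_notMem hxt]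
            exact zero_le
      _ = volume (Iic l.toReal ∩ Ioi 0) := by
          rw [lintegral_indicator measurableSet_Iic, setLIntegral_one,
            Measure.restrict_apply measurableSet_Iic]
      _ ≤ l := by
          have : Iic l.toReal ∩ Ioi 0 = Ioc 0 l.toReal := by
            ext t; simp only [mem_inter_iff, mem_Iic, mem_Ioi, mem_Ioc]; tauto
          rw [this, Real.volume_Ioc, sub_zero, ENNReal.ofReal_toReal hlt]
  · rintro ⟨q, hq0, hlq, hxq⟩
    have hsub : ∀ t ∈ Ioo (0 : ℝ) (q : ℝ), x ∈ starSet {p | t < |f p|} := by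
      intro t ht
      exact starSet_mono (fun p hp => lt_trans ht.2 hp) hxq
    calc l < ENNReal.ofReal (q : ℝ) := hlq
      _ = volume (Ioo (0 : ℝ) (q : ℝ)) := by rw [Real.volume_Ioo, sub_zero]
      _ = ∫⁻ t in Ioo (0 : ℝ) (q : ℝ), (1 : ℝ≥0∞) := (setLIntegral_one _).symm
      _ = ∫⁻ t in Ioo (0 : ℝ) (q : ℝ),
            (starSet {p | t < |f p|}).indicator (fun _ => (1 : ℝ≥0∞)) x := by
          refine setLIntegral_congr_fun measurableSet_Ioo (fun t ht => ?_)
          rw [indicator_of_mem (hsub t ht)]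
      _ ≤ rearr2 f x := by
          refine lintegral_mono' (Measure.restrict_mono Ioo_subset_Ioi_self le_rfl) ?_
          exact le_rfl


lemma directed_helper {β : Type*} {S : ℚ → Set β} (hS : ∀ q q' : ℚ, q ≤ q' → S q' ⊆ S q)
    {c : ℚ → Prop} [DecidablePred c] (hc : ∀ q q', c q → c q' → c (min q q')) :
    Directed (· ⊆ ·) (fun q => if c q then S q else ∅) := by
  intro q q'
  by_cases hq : c q
  · by_cases hq' : c q'
    · refine ⟨min q q', ?_, ?_⟩
      · show (if c q then S q else ∅) ⊆ (if c (min q q') then S (min q q') else ∅)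
        rw [if_pos hq, if_pos (hc q q' hq hq')]
        exact hS _ _ (min_le_left q q')
      · show (if c q' then S q' else ∅) ⊆ (if c (min q q') then S (min q q') else ∅)
        rw [if_pos hq', if_pos (hc q q' hq hq')]
        exact hS _ _ (min_le_right q q')
    · refine ⟨q, subset_rfl, ?_⟩
      show (if c q' then S q' else ∅) ⊆ (if c q then S q else ∅)
      rw [if_neg hq']
      exact empty_subset _
  · refine ⟨q', ?_, subset_rfl⟩
    show (if c q then S q else ∅) ⊆ (if c q' then S q' else ∅)
    rw [if_neg hq]
    exact empty_subset _


lemma cond_min (l : ℝ≥0∞) : ∀ q q' : ℚ, (0 < (q : ℝ) ∧ l < ENNReal.ofReal (q : ℝ)) →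
    (0 < (q' : ℝ) ∧ l < ENNReal.ofReal (q' : ℝ)) →
    (0 < ((min q q' : ℚ) : ℝ) ∧ l < ENNReal.ofReal ((min q q' : ℚ) : ℝ)) := by
  intro q q' hq hq'
  rcases le_total q q' with h | h
  · rw [min_eq_left h]; exact hq
  · rw [min_eq_right h]; exact hq'


lemma dist_eq (f : ℝ × ℝ → ℝ) (hf : Measurable f) (l : ℝ≥0∞) :
    volume {x : ℝ × ℝ | l < rearr2 f x}
      = volume {x : ℝ × ℝ | l < ENNReal.ofReal |f x|} := by
  classical
  set A : ℚ → Set (ℝ × ℝ) := fun q =>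
    if 0 < (q : ℝ) ∧ l < ENNReal.ofReal (q : ℝ) then starSet {p | (q : ℝ) < |f p|} else ∅
    with hAdef
  set B : ℚ → Set (ℝ × ℝ) := fun q =>
    if 0 < (q : ℝ) ∧ l < ENNReal.ofReal (q : ℝ) then {p | (q : ℝ) < |f p|} else ∅
    with hBdef
  have hA : {x : ℝ × ℝ | l < rearr2 f x} = ⋃ q, A q := by
    ext x
    rw [mem_setOf_eq, lt_rearr2_iff, mem_iUnion]
    constructor
    · rintro ⟨q, h1, h2, h3⟩
      refine ⟨q, ?_⟩
      show x ∈ A q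
      simp only [hAdef, if_pos (And.intro h1 h2)]
      exact h3
    · rintro ⟨q, hq⟩
      by_cases hc : 0 < (q : ℝ) ∧ l < ENNReal.ofReal (q : ℝ)
      · refine ⟨q, hc.1, hc.2, ?_⟩
        simp only [hAdef, if_pos hc] at hq; exact hq
      · simp only [hAdef, if_neg hc] at hq
        exact absurd hq (notMem_empty x)
  have hB : {x : ℝ × ℝ | l < ENNReal.ofReal |f x|} = ⋃ q, B q := by
    ext x
    rw [mem_setOf_eq, mem_iUnion]
    constructor
    · intro hx
      obtain ⟨r, hr0, hlr, hrf⟩ := ENNReal.lt_iff_exists_real_btwn.mp hx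
      have hfpos : 0 < |f x| := by
        by_contra hneg
        push_neg at hneg
        rw [ENNReal.ofReal_eq_zero.mpr hneg] at hrf
        exact absurd hrf (not_lt.mpr zero_le)
      have hrf' : r < |f x| := by rwa [ENNReal.ofReal_lt_ofReal_iff hfpos] at hrf
      obtain ⟨q, hq1, hq2⟩ := exists_rat_btwn hrf'
      have hc : 0 < (q : ℝ) ∧ l < ENNReal.ofReal (q : ℝ) :=
        ⟨lt_of_le_of_lt hr0 hq1, lt_of_lt_of_le hlr (ENNReal.ofReal_le_ofReal hq1.le)⟩
      refine ⟨q, ?_⟩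
      show x ∈ B q
      simp only [hBdef, if_pos hc]
      exact hq2
    · rintro ⟨q, hq⟩
      by_cases hc : 0 < (q : ℝ) ∧ l < ENNReal.ofReal (q : ℝ)
      · simp only [hBdef, if_pos hc] at hq
        exact lt_of_lt_of_le hc.2 (ENNReal.ofReal_le_ofReal hq.le)
      · simp only [hBdef, if_neg hc] at hq
        exact absurd hq (notMem_empty x)
  have hdA : Directed (· ⊆ ·) A := by
    refine directed_helper (fun q q' hqq => starSet_mono fun p hp => ?_) (cond_min l)
    simp only [mem_setOf_eq] at hp ⊢
    exact lt_of_le_of_lt (show (q : ℝ) ≤ (q' : ℝ) by exact_mod_cast hqq) hp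
  have hdB : Directed (· ⊆ ·) B := by
    refine directed_helper (fun q q' hqq p hp => ?_) (cond_min l)
    simp only [mem_setOf_eq] at hp ⊢
    exact lt_of_le_of_lt (show (q : ℝ) ≤ (q' : ℝ) by exact_mod_cast hqq) hp
  rw [hA, hB, hdA.measure_iUnion, hdB.measure_iUnion]
  refine iSup_congr fun q => ?_
  by_cases hc : 0 < (q : ℝ) ∧ l < ENNReal.ofReal (q : ℝ)
  · simp only [hAdef, hBdef, if_pos hc]
    exact vol_starSet (measurableSet_lt measurable_const hf.abs)
  · simp only [hAdef, hBdef, if_neg hc]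

theorem stmt13 (f : ℝ × ℝ → ℝ) (hf : Measurable f) :
    ∀ t : ℝ, 0 < t →
      decRe volume (rearr2 f) t
        = decRe volume (fun x => ENNReal.ofReal |f x|) t := by
  intro t _
  show sInf _ = sInf _
  congr 1
  ext l
  simp only [mem_setOf_eq]
  rw [dist_eq f hf l]
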